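/- Let u : ℝ² → ℝ be four times continuously differentiable on a neighborhood of (a,b). Then there exist constants C > 0 and h₀ > 0 such that for all h ∈ (0, h₀]: | ∂ₓ∂ᵧu(a,b) − (1/(2h²))·( 2h·∂ₓu(a,b) − u(a+h, b−h) + u(a−h, b−h) ) − (h/2)·( ∂ₓ∂ᵧ∂ᵧu(a,b) + (1/3)·∂ₓ∂ₓ∂ₓu(a,b) ) | ≤ C·h². -/

import Mathlib

open Set
set_option maxHeartbeats 1000000

/-- Partial derivative in the first variable of `u : ℝ × ℝ → ℝ`. -/
noncomputable def pdx (u : ℝ × ℝ → ℝ) (p : ℝ × ℝ) : ℝ :=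
  deriv (fun t => u (t, p.2)) p.1

/-- Partial derivative in the second variable of `u : ℝ × ℝ → ℝ`. -/
noncomputable def pdy (u : ℝ × ℝ → ℝ) (p : ℝ × ℝ) : ℝ :=
  deriv (fun t => u (p.1, t)) p.2

lemma iteratedDerivWithin_Icc_eq' {f : ℝ → ℝ} {O : Set ℝ} (hO : IsOpen O) {n : ℕ}
    (hf : ContDiffOn ℝ n f O) {r : ℝ} (hr : 0 < r) (hsub : Icc (0:ℝ) r ⊆ O) :
    ∀ k, k ≤ n → ∀ y ∈ Icc (0:ℝ) r, iteratedDerivWithin k f (Icc 0 r) y = iteratedDeriv k f y := by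
  have hOeq : ∀ k, ∀ x ∈ O, iteratedDerivWithin k f O x = iteratedDeriv k f x := by
    intro k x hx
    rw [iteratedDerivWithin_eq_iteratedFDerivWithin, iteratedDeriv_eq_iteratedFDeriv,
      iteratedFDerivWithin_of_isOpen k hO hx]
  intro k
  induction k with
  | zero => intro _ y hy; simp
  | succ k ih =>
    intro hk y hy
    have hk' : (k:ℕ) ≤ n := le_trans (Nat.le_succ k) hk
    have hdiff : DifferentiableAt ℝ (iteratedDeriv k f) y := by
      have hdOn : DifferentiableOn ℝ (iteratedDerivWithin k f O) O :=
        hf.differentiableOn_iteratedDerivWithin (by exact_mod_cast hk) hO.uniqueDiffOn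
      have h1 : DifferentiableAt ℝ (iteratedDerivWithin k f O) y :=
        (hdOn y (hsub hy)).differentiableAt (hO.mem_nhds (hsub hy))
      have h2 : iteratedDerivWithin k f O =ᶠ[nhds y] iteratedDeriv k f :=
        Filter.eventuallyEq_of_mem (hO.mem_nhds (hsub hy)) (fun x hx => hOeq k x hx)
      exact h2.differentiableAt_iff.mp h1
    rw [iteratedDerivWithin_succ,
      derivWithin_congr (fun z hz => ih hk' z hz) (ih hk' y hy),
      hdiff.derivWithin ((uniqueDiffOn_Icc hr) y hy), iteratedDeriv_succ]

lemma HasDerivAt.clmApp {α : Type*} [NormedAddCommGroup α] [NormedSpace ℝ α]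
    {g : ℝ → (ℝ × ℝ) →L[ℝ] α} {g' : (ℝ × ℝ) →L[ℝ] α} {x : ℝ}
    (H : HasDerivAt g g' x) (w : ℝ × ℝ) :
    HasDerivAt (fun t => g t w) (g' w) x :=
  (ContinuousLinearMap.apply ℝ α w).hasFDerivAt.comp_hasDerivAt x H

noncomputable def Phi (u : ℝ × ℝ → ℝ) (a b h : ℝ) : ℝ :=
  fderiv ℝ u (a,b) (1,0) * (2*h) - u (a+h, b-h) + u (a-h, b-h)
    - fderiv ℝ (fderiv ℝ u) (a,b) (1,0) (0,1) * (2*h^2)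
    + (fderiv ℝ (fderiv ℝ (fderiv ℝ u)) (a,b) (1,0) (0,1) (0,1)
       + 1/3 * fderiv ℝ (fderiv ℝ (fderiv ℝ u)) (a,b) (1,0) (1,0) (1,0)) * h^3

noncomputable def Phi1 (u : ℝ × ℝ → ℝ) (a b h : ℝ) : ℝ :=
  fderiv ℝ u (a,b) (1,0) * 2 - fderiv ℝ u (a+h, b-h) (1,-1) + fderiv ℝ u (a-h, b-h) (-1,-1)
    - fderiv ℝ (fderiv ℝ u) (a,b) (1,0) (0,1) * (4*h)
    + (fderiv ℝ (fderiv ℝ (fderiv ℝ u)) (a,b) (1,0) (0,1) (0,1)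
       + 1/3 * fderiv ℝ (fderiv ℝ (fderiv ℝ u)) (a,b) (1,0) (1,0) (1,0)) * (3*h^2)

noncomputable def Phi2 (u : ℝ × ℝ → ℝ) (a b h : ℝ) : ℝ :=
  -(fderiv ℝ (fderiv ℝ u) (a+h, b-h) (1,-1) (1,-1))
    + fderiv ℝ (fderiv ℝ u) (a-h, b-h) (-1,-1) (-1,-1)
    - fderiv ℝ (fderiv ℝ u) (a,b) (1,0) (0,1) * 4
    + (fderiv ℝ (fderiv ℝ (fderiv ℝ u)) (a,b) (1,0) (0,1) (0,1)
       + 1/3 * fderiv ℝ (fderiv ℝ (fderiv ℝ u)) (a,b) (1,0) (1,0) (1,0)) * (6*h)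

noncomputable def Phi3 (u : ℝ × ℝ → ℝ) (a b h : ℝ) : ℝ :=
  -(fderiv ℝ (fderiv ℝ (fderiv ℝ u)) (a+h, b-h) (1,-1) (1,-1) (1,-1))
    + fderiv ℝ (fderiv ℝ (fderiv ℝ u)) (a-h, b-h) (-1,-1) (-1,-1) (-1,-1)
    + (fderiv ℝ (fderiv ℝ (fderiv ℝ u)) (a,b) (1,0) (0,1) (0,1)
       + 1/3 * fderiv ℝ (fderiv ℝ (fderiv ℝ u)) (a,b) (1,0) (1,0) (1,0)) * 6

/-- Finite-difference approximation of the mixed second derivative using the first-order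
derivative `∂ₓu` at the center point, with its explicit first-order correction terms
(paper's eq. (28), case 4 of Fig. 3). -/
theorem stmt_5 (u : ℝ × ℝ → ℝ) (a b : ℝ) (hu : ContDiffAt ℝ 4 u (a, b)) :
    ∃ C > (0:ℝ), ∃ h₀ > (0:ℝ), ∀ h ∈ Set.Ioc (0:ℝ) h₀,
      |pdx (pdy u) (a, b)
        - 1 / (2 * h ^ 2) *
            (2 * h * pdx u (a, b) - u (a + h, b - h) + u (a - h, b - h))
        - h / 2 * (pdx (pdy (pdy u)) (a, b) + 1 / 3 * pdx (pdx (pdx u)) (a, b))|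
        ≤ C * h ^ 2 := by
  obtain ⟨ε, εpos, hball⟩ : ∃ ε > 0, ∀ p ∈ Metric.ball ((a,b) : ℝ×ℝ) ε, ContDiffAt ℝ 4 u p := by
    have h := hu.eventually (by simp)
    rw [Metric.eventually_nhds_iff_ball] at h
    exact h
  -- memberships
  have hm1 : ∀ h : ℝ, |h| < ε → ((a + h, b - h) : ℝ × ℝ) ∈ Metric.ball ((a,b) : ℝ×ℝ) ε := by
    intro h hh
    simp only [Metric.mem_ball, Prod.dist_eq, Real.dist_eq]
    rw [show a + h - a = h by ring, show b - h - b = -h by ring, abs_neg]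
    exact max_lt hh hh
  have hm2 : ∀ h : ℝ, |h| < ε → ((a - h, b - h) : ℝ × ℝ) ∈ Metric.ball ((a,b) : ℝ×ℝ) ε := by
    intro h hh
    simp only [Metric.mem_ball, Prod.dist_eq, Real.dist_eq]
    rw [show a - h - a = -h by ring, show b - h - b = -h by ring, abs_neg]
    exact max_lt hh hh
  have hmy : ∀ p : ℝ×ℝ, p ∈ Metric.ball ((a,b) : ℝ×ℝ) ε → ∀ t : ℝ, |t - p.2| < ε - dist p ((a,b):ℝ×ℝ) →
      ((p.1, t) : ℝ × ℝ) ∈ Metric.ball ((a,b) : ℝ×ℝ) ε := by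
    intro p hp t ht
    rw [Metric.mem_ball] at hp ⊢
    have : dist ((p.1, t) : ℝ×ℝ) p ≤ |t - p.2| := by
      rw [Prod.dist_eq, Real.dist_eq, Real.dist_eq, sub_self, abs_zero]
      exact max_le (abs_nonneg _) le_rfl
    calc dist ((p.1, t) : ℝ×ℝ) ((a,b):ℝ×ℝ) ≤ dist ((p.1, t) : ℝ×ℝ) p + dist p ((a,b):ℝ×ℝ) :=
          dist_triangle _ _ _
      _ < ε := by linarith
  have hmx : ∀ t : ℝ, |t - a| < ε → ((t, b) : ℝ × ℝ) ∈ Metric.ball ((a,b) : ℝ×ℝ) ε := by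
    intro t ht
    simp only [Metric.mem_ball, Prod.dist_eq, Real.dist_eq]
    rw [sub_self, abs_zero]
    exact max_lt ht (by linarith [abs_nonneg (t-a)])
  have hmem0 : ((a,b) : ℝ×ℝ) ∈ Metric.ball ((a,b) : ℝ×ℝ) ε := Metric.mem_ball_self εpos
  -- regularity
  have hC3 : ∀ p ∈ Metric.ball ((a,b) : ℝ×ℝ) ε, ContDiffAt ℝ 3 (fderiv ℝ u) p :=
    fun p hp => (hball p hp).fderiv_right (by norm_num)
  have hC2 : ∀ p ∈ Metric.ball ((a,b) : ℝ×ℝ) ε, ContDiffAt ℝ 2 (fderiv ℝ (fderiv ℝ u)) p :=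
    fun p hp => (hC3 p hp).fderiv_right (by norm_num)
  have hDu : ∀ p ∈ Metric.ball ((a,b) : ℝ×ℝ) ε, HasFDerivAt u (fderiv ℝ u p) p :=
    fun p hp => ((hball p hp).differentiableAt (by norm_num)).hasFDerivAt
  have hDF1 : ∀ p ∈ Metric.ball ((a,b) : ℝ×ℝ) ε,
      HasFDerivAt (fderiv ℝ u) (fderiv ℝ (fderiv ℝ u) p) p :=
    fun p hp => ((hC3 p hp).differentiableAt (by norm_num)).hasFDerivAt
  have hDF2 : ∀ p ∈ Metric.ball ((a,b) : ℝ×ℝ) ε,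
      HasFDerivAt (fderiv ℝ (fderiv ℝ u)) (fderiv ℝ (fderiv ℝ (fderiv ℝ u)) p) p :=
    fun p hp => ((hC2 p hp).differentiableAt (by norm_num)).hasFDerivAt
  -- first partials
  have hpdx : ∀ p ∈ Metric.ball ((a,b) : ℝ×ℝ) ε, pdx u p = fderiv ℝ u p (1,0) := by
    intro p hp
    have hc : HasDerivAt (fun t : ℝ => ((t, p.2) : ℝ×ℝ)) ((1:ℝ),(0:ℝ)) p.1 :=
      (hasDerivAt_id _).prodMk (hasDerivAt_const _ _)
    exact ((Prod.mk.eta (p := p) ▸ hDu p hp).comp_hasDerivAt p.1 hc).deriv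
  have hpdy : ∀ p ∈ Metric.ball ((a,b) : ℝ×ℝ) ε, pdy u p = fderiv ℝ u p (0,1) := by
    intro p hp
    have hc : HasDerivAt (fun t : ℝ => ((p.1, t) : ℝ×ℝ)) ((0:ℝ),(1:ℝ)) p.2 :=
      (hasDerivAt_const _ _).prodMk (hasDerivAt_id _)
    exact ((Prod.mk.eta (p := p) ▸ hDu p hp).comp_hasDerivAt p.2 hc).deriv
  -- small-nbhd eventual facts
  have hevy : ∀ p : ℝ×ℝ, p ∈ Metric.ball ((a,b) : ℝ×ℝ) ε →
      ∀ᶠ t in nhds p.2, ((p.1, t) : ℝ×ℝ) ∈ Metric.ball ((a,b) : ℝ×ℝ) ε := by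
    intro p hp
    have hδ : (0:ℝ) < ε - dist p ((a,b):ℝ×ℝ) := by
      rw [Metric.mem_ball] at hp; linarith
    have hcont : ContinuousAt (fun t : ℝ => |t - p.2|) p.2 := by fun_prop
    have h0 : |p.2 - p.2| < ε - dist p ((a,b):ℝ×ℝ) := by rw [sub_self, abs_zero]; exact hδ
    have := hcont.eventually_lt continuousAt_const h0
    filter_upwards [this] with t ht using hmy p hp t ht
  -- second partials
  have hpdyy : ∀ p ∈ Metric.ball ((a,b) : ℝ×ℝ) ε,
      pdy (pdy u) p = fderiv ℝ (fderiv ℝ u) p (0,1) (0,1) := by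
    intro p hp
    have hev : (fun t => pdy u (p.1, t)) =ᶠ[nhds p.2] fun t => fderiv ℝ u (p.1, t) (0,1) := by
      filter_upwards [hevy p hp] with t ht using hpdy _ ht
    have hc : HasDerivAt (fun t : ℝ => ((p.1, t) : ℝ×ℝ)) ((0:ℝ),(1:ℝ)) p.2 :=
      (hasDerivAt_const _ _).prodMk (hasDerivAt_id _)
    have h1 : HasDerivAt (fun t => fderiv ℝ u (p.1, t)) (fderiv ℝ (fderiv ℝ u) p (0,1)) p.2 :=
      (Prod.mk.eta (p := p) ▸ hDF1 p hp).comp_hasDerivAt p.2 hc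
    show deriv (fun t => pdy u (p.1, t)) p.2 = _
    rw [hev.deriv_eq, (h1.clmApp _).deriv]
  have hpdxx : ∀ p ∈ Metric.ball ((a,b) : ℝ×ℝ) ε,
      pdx (pdx u) p = fderiv ℝ (fderiv ℝ u) p (1,0) (1,0) := by
    intro p hp
    have hevx : ∀ᶠ t in nhds p.1, ((t, p.2) : ℝ×ℝ) ∈ Metric.ball ((a,b) : ℝ×ℝ) ε := by
      have hcont : ContinuousAt (fun t : ℝ => ((t, p.2) : ℝ×ℝ)) p.1 := by fun_prop
      have : ContinuousAt (fun t : ℝ => ((t, p.2) : ℝ×ℝ)) p.1 → _ := fun h =>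
        h.eventually_mem (Metric.isOpen_ball.mem_nhds (by rwa [Prod.mk.eta]))
      exact this hcont
    have hev : (fun t => pdx u (t, p.2)) =ᶠ[nhds p.1] fun t => fderiv ℝ u (t, p.2) (1,0) := by
      filter_upwards [hevx] with t ht using hpdx _ ht
    have hc : HasDerivAt (fun t : ℝ => ((t, p.2) : ℝ×ℝ)) ((1:ℝ),(0:ℝ)) p.1 :=
      (hasDerivAt_id _).prodMk (hasDerivAt_const _ _)
    have h1 : HasDerivAt (fun t => fderiv ℝ u (t, p.2)) (fderiv ℝ (fderiv ℝ u) p (1,0)) p.1 :=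
      (Prod.mk.eta (p := p) ▸ hDF1 p hp).comp_hasDerivAt p.1 hc
    show deriv (fun t => pdx u (t, p.2)) p.1 = _
    rw [hev.deriv_eq, (h1.clmApp _).deriv]
  have hevx0 : ∀ᶠ t in nhds a, ((t, b) : ℝ×ℝ) ∈ Metric.ball ((a,b) : ℝ×ℝ) ε := by
    have hcont : ContinuousAt (fun t : ℝ => |t - a|) a := by fun_prop
    have := hcont.eventually_lt continuousAt_const (by simpa using εpos)
    filter_upwards [this] with t ht using hmx t ht
  -- mixed second partial at the center
  have hcx : HasDerivAt (fun t : ℝ => ((t, b) : ℝ×ℝ)) ((1:ℝ),(0:ℝ)) a :=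
    (hasDerivAt_id _).prodMk (hasDerivAt_const _ _)
  have hMd : pdx (pdy u) (a,b) = fderiv ℝ (fderiv ℝ u) (a,b) (1,0) (0,1) := by
    have hev : (fun t => pdy u (t, b)) =ᶠ[nhds a] fun t => fderiv ℝ u (t, b) (0,1) := by
      filter_upwards [hevx0] with t ht using hpdy _ ht
    have h1 : HasDerivAt (fun t => fderiv ℝ u (t, b)) (fderiv ℝ (fderiv ℝ u) (a,b) (1,0)) a :=
      (hDF1 (a,b) hmem0).comp_hasDerivAt a hcx
    show deriv (fun t => pdy u (t, b)) a = _
    rw [hev.deriv_eq, (h1.clmApp _).deriv]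
  -- third partials at center
  have hKd1 : pdx (pdy (pdy u)) (a,b)
      = fderiv ℝ (fderiv ℝ (fderiv ℝ u)) (a,b) (1,0) (0,1) (0,1) := by
    have hev : (fun t => pdy (pdy u) (t, b))
        =ᶠ[nhds a] fun t => fderiv ℝ (fderiv ℝ u) (t, b) (0,1) (0,1) := by
      filter_upwards [hevx0] with t ht using hpdyy _ ht
    have h1 : HasDerivAt (fun t => fderiv ℝ (fderiv ℝ u) (t, b))
        (fderiv ℝ (fderiv ℝ (fderiv ℝ u)) (a,b) (1,0)) a :=
      HasFDerivAt.comp_hasDerivAt (l := fderiv ℝ (fderiv ℝ u)) a (hDF2 (a,b) hmem0) hcx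
    show deriv (fun t => pdy (pdy u) (t, b)) a = _
    rw [hev.deriv_eq, ((h1.clmApp _).clmApp _).deriv]
  have hKd2 : pdx (pdx (pdx u)) (a,b)
      = fderiv ℝ (fderiv ℝ (fderiv ℝ u)) (a,b) (1,0) (1,0) (1,0) := by
    have hev : (fun t => pdx (pdx u) (t, b))
        =ᶠ[nhds a] fun t => fderiv ℝ (fderiv ℝ u) (t, b) (1,0) (1,0) := by
      filter_upwards [hevx0] with t ht using hpdxx _ ht
    have h1 : HasDerivAt (fun t => fderiv ℝ (fderiv ℝ u) (t, b))
        (fderiv ℝ (fderiv ℝ (fderiv ℝ u)) (a,b) (1,0)) a :=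
      HasFDerivAt.comp_hasDerivAt (l := fderiv ℝ (fderiv ℝ u)) a (hDF2 (a,b) hmem0) hcx
    show deriv (fun t => pdx (pdx u) (t, b)) a = _
    rw [hev.deriv_eq, ((h1.clmApp _).clmApp _).deriv]
  -- symmetry
  have hsym2 : ∀ p ∈ Metric.ball ((a,b) : ℝ×ℝ) ε, ∀ v w : ℝ × ℝ,
      fderiv ℝ (fderiv ℝ u) p v w = fderiv ℝ (fderiv ℝ u) p w v :=
    fun p hp v w => ((hball p hp).isSymmSndFDerivAt (by norm_num)).eq v w
  have hsym3a : ∀ v w : ℝ×ℝ, fderiv ℝ (fderiv ℝ (fderiv ℝ u)) (a,b) v w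
      = fderiv ℝ (fderiv ℝ (fderiv ℝ u)) (a,b) w v :=
    fun v w => ((hC3 (a,b) hmem0).isSymmSndFDerivAt (by norm_num)).eq v w
  have hsym3b : fderiv ℝ (fderiv ℝ (fderiv ℝ u)) (a,b) ((0:ℝ),(1:ℝ)) ((0:ℝ),(1:ℝ)) ((1:ℝ),(0:ℝ))
      = fderiv ℝ (fderiv ℝ (fderiv ℝ u)) (a,b) ((0:ℝ),(1:ℝ)) ((1:ℝ),(0:ℝ)) ((0:ℝ),(1:ℝ)) := by
    have hc : HasDerivAt (fun t : ℝ => ((a, t) : ℝ×ℝ)) ((0:ℝ),(1:ℝ)) b :=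
      (hasDerivAt_const _ _).prodMk (hasDerivAt_id _)
    have h1 : HasDerivAt (fun t => fderiv ℝ (fderiv ℝ u) (a, t))
        (fderiv ℝ (fderiv ℝ (fderiv ℝ u)) (a,b) (0,1)) b :=
      HasFDerivAt.comp_hasDerivAt (l := fderiv ℝ (fderiv ℝ u)) b (hDF2 (a,b) hmem0) hc
    have d1 := ((h1.clmApp ((0:ℝ),(1:ℝ))).clmApp ((1:ℝ),(0:ℝ))).deriv
    have d2 := ((h1.clmApp ((1:ℝ),(0:ℝ))).clmApp ((0:ℝ),(1:ℝ))).deriv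
    have hev : (fun t => fderiv ℝ (fderiv ℝ u) (a, t) ((0:ℝ),(1:ℝ)) ((1:ℝ),(0:ℝ)))
        =ᶠ[nhds b] fun t => fderiv ℝ (fderiv ℝ u) (a, t) ((1:ℝ),(0:ℝ)) ((0:ℝ),(1:ℝ)) := by
      filter_upwards [hevy ((a,b) : ℝ×ℝ) hmem0] with t ht using hsym2 _ ht _ _
    rw [← d1, ← d2, hev.deriv_eq]
  -- derivative chain
  have hc1 : ∀ h : ℝ, HasDerivAt (fun t : ℝ => ((a + t, b - t) : ℝ×ℝ)) ((1:ℝ),(-1:ℝ)) h :=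
    fun h => ((hasDerivAt_id h).const_add a).prodMk ((hasDerivAt_id h).const_sub b)
  have hc2 : ∀ h : ℝ, HasDerivAt (fun t : ℝ => ((a - t, b - t) : ℝ×ℝ)) ((-1:ℝ),(-1:ℝ)) h :=
    fun h => ((hasDerivAt_id h).const_sub a).prodMk ((hasDerivAt_id h).const_sub b)
  have Hφ1 : ∀ h : ℝ, |h| < ε → HasDerivAt (Phi u a b) (Phi1 u a b h) h := by
    intro h hh
    have d1 : HasDerivAt (fun t : ℝ => fderiv ℝ u (a,b) (1,0) * (2*t))
        (fderiv ℝ u (a,b) (1,0) * (2*1)) h :=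
      ((hasDerivAt_id h).const_mul (2:ℝ)).const_mul _
    have d2 : HasDerivAt (fun t : ℝ => u (a + t, b - t)) (fderiv ℝ u (a+h, b-h) (1,-1)) h :=
      (hDu _ (hm1 h hh)).comp_hasDerivAt h (hc1 h)
    have d3 : HasDerivAt (fun t : ℝ => u (a - t, b - t)) (fderiv ℝ u (a-h, b-h) (-1,-1)) h :=
      (hDu _ (hm2 h hh)).comp_hasDerivAt h (hc2 h)
    have d4 : HasDerivAt (fun t : ℝ => fderiv ℝ (fderiv ℝ u) (a,b) (1,0) (0,1) * (2*t^2))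
        (fderiv ℝ (fderiv ℝ u) (a,b) (1,0) (0,1) * (2*((2:ℕ)*h^(2-1)))) h :=
      ((hasDerivAt_pow 2 h).const_mul (2:ℝ)).const_mul _
    have d5 : HasDerivAt (fun t : ℝ =>
        (fderiv ℝ (fderiv ℝ (fderiv ℝ u)) (a,b) (1,0) (0,1) (0,1)
         + 1/3 * fderiv ℝ (fderiv ℝ (fderiv ℝ u)) (a,b) (1,0) (1,0) (1,0)) * t^3)
        ((fderiv ℝ (fderiv ℝ (fderiv ℝ u)) (a,b) (1,0) (0,1) (0,1)
         + 1/3 * fderiv ℝ (fderiv ℝ (fderiv ℝ u)) (a,b) (1,0) (1,0) (1,0)) * ((3:ℕ)*h^(3-1))) h :=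
      (hasDerivAt_pow 3 h).const_mul _
    have H := (((d1.sub d2).add d3).sub d4).add d5
    have heq : Phi1 u a b h = fderiv ℝ u (a,b) (1,0) * (2*1)
        - fderiv ℝ u (a+h, b-h) (1,-1) + fderiv ℝ u (a-h, b-h) (-1,-1)
        - fderiv ℝ (fderiv ℝ u) (a,b) (1,0) (0,1) * (2*((2:ℕ)*h^(2-1)))
        + (fderiv ℝ (fderiv ℝ (fderiv ℝ u)) (a,b) (1,0) (0,1) (0,1)
         + 1/3 * fderiv ℝ (fderiv ℝ (fderiv ℝ u)) (a,b) (1,0) (1,0) (1,0)) * ((3:ℕ)*h^(3-1)) := by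
      unfold Phi1; push_cast; ring
    rw [heq]; exact H
  have Hφ2 : ∀ h : ℝ, |h| < ε → HasDerivAt (Phi1 u a b) (Phi2 u a b h) h := by
    intro h hh
    have d1 : HasDerivAt (fun _ : ℝ => fderiv ℝ u (a,b) ((1:ℝ),(0:ℝ)) * 2) 0 h :=
      hasDerivAt_const _ _
    have d2 : HasDerivAt (fun t : ℝ => fderiv ℝ u (a + t, b - t) (1,-1))
        (fderiv ℝ (fderiv ℝ u) (a+h, b-h) (1,-1) (1,-1)) h :=
      ((hDF1 _ (hm1 h hh)).comp_hasDerivAt h (hc1 h)).clmApp _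
    have d3 : HasDerivAt (fun t : ℝ => fderiv ℝ u (a - t, b - t) (-1,-1))
        (fderiv ℝ (fderiv ℝ u) (a-h, b-h) (-1,-1) (-1,-1)) h :=
      ((hDF1 _ (hm2 h hh)).comp_hasDerivAt h (hc2 h)).clmApp _
    have d4 : HasDerivAt (fun t : ℝ => fderiv ℝ (fderiv ℝ u) (a,b) (1,0) (0,1) * (4*t))
        (fderiv ℝ (fderiv ℝ u) (a,b) (1,0) (0,1) * (4*1)) h :=
      ((hasDerivAt_id h).const_mul (4:ℝ)).const_mul _
    have d5 : HasDerivAt (fun t : ℝ =>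
        (fderiv ℝ (fderiv ℝ (fderiv ℝ u)) (a,b) (1,0) (0,1) (0,1)
         + 1/3 * fderiv ℝ (fderiv ℝ (fderiv ℝ u)) (a,b) (1,0) (1,0) (1,0)) * (3*t^2))
        ((fderiv ℝ (fderiv ℝ (fderiv ℝ u)) (a,b) (1,0) (0,1) (0,1)
         + 1/3 * fderiv ℝ (fderiv ℝ (fderiv ℝ u)) (a,b) (1,0) (1,0) (1,0)) * (3*((2:ℕ)*h^(2-1)))) h :=
      ((hasDerivAt_pow 2 h).const_mul (3:ℝ)).const_mul _
    have H := (((d1.sub d2).add d3).sub d4).add d5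
    have heq : Phi2 u a b h = 0
        - fderiv ℝ (fderiv ℝ u) (a+h, b-h) (1,-1) (1,-1)
        + fderiv ℝ (fderiv ℝ u) (a-h, b-h) (-1,-1) (-1,-1)
        - fderiv ℝ (fderiv ℝ u) (a,b) (1,0) (0,1) * (4*1)
        + (fderiv ℝ (fderiv ℝ (fderiv ℝ u)) (a,b) (1,0) (0,1) (0,1)
         + 1/3 * fderiv ℝ (fderiv ℝ (fderiv ℝ u)) (a,b) (1,0) (1,0) (1,0)) * (3*((2:ℕ)*h^(2-1))) := by
      unfold Phi2; push_cast; ring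
    rw [heq]; exact H
  have Hφ3 : ∀ h : ℝ, |h| < ε → HasDerivAt (Phi2 u a b) (Phi3 u a b h) h := by
    intro h hh
    have d2 : HasDerivAt (fun t : ℝ => fderiv ℝ (fderiv ℝ u) (a + t, b - t) (1,-1) (1,-1))
        (fderiv ℝ (fderiv ℝ (fderiv ℝ u)) (a+h, b-h) (1,-1) (1,-1) (1,-1)) h :=
      ((HasFDerivAt.comp_hasDerivAt (l := fderiv ℝ (fderiv ℝ u)) h (hDF2 _ (hm1 h hh)) (hc1 h)).clmApp _).clmApp _
    have d3 : HasDerivAt (fun t : ℝ => fderiv ℝ (fderiv ℝ u) (a - t, b - t) (-1,-1) (-1,-1))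
        (fderiv ℝ (fderiv ℝ (fderiv ℝ u)) (a-h, b-h) (-1,-1) (-1,-1) (-1,-1)) h :=
      ((HasFDerivAt.comp_hasDerivAt (l := fderiv ℝ (fderiv ℝ u)) h (hDF2 _ (hm2 h hh)) (hc2 h)).clmApp _).clmApp _
    have d4 : HasDerivAt (fun _ : ℝ => fderiv ℝ (fderiv ℝ u) (a,b) ((1:ℝ),(0:ℝ)) ((0:ℝ),(1:ℝ)) * 4) 0 h :=
      hasDerivAt_const _ _
    have d5 : HasDerivAt (fun t : ℝ =>
        (fderiv ℝ (fderiv ℝ (fderiv ℝ u)) (a,b) (1,0) (0,1) (0,1)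
         + 1/3 * fderiv ℝ (fderiv ℝ (fderiv ℝ u)) (a,b) (1,0) (1,0) (1,0)) * (6*t))
        ((fderiv ℝ (fderiv ℝ (fderiv ℝ u)) (a,b) (1,0) (0,1) (0,1)
         + 1/3 * fderiv ℝ (fderiv ℝ (fderiv ℝ u)) (a,b) (1,0) (1,0) (1,0)) * (6*1)) h :=
      ((hasDerivAt_id h).const_mul (6:ℝ)).const_mul _
    have H := ((d2.neg.add d3).sub d4).add d5
    have heq : Phi3 u a b h =
        -(fderiv ℝ (fderiv ℝ (fderiv ℝ u)) (a+h, b-h) (1,-1) (1,-1) (1,-1))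
        + fderiv ℝ (fderiv ℝ (fderiv ℝ u)) (a-h, b-h) (-1,-1) (-1,-1) (-1,-1)
        - 0
        + (fderiv ℝ (fderiv ℝ (fderiv ℝ u)) (a,b) (1,0) (0,1) (0,1)
         + 1/3 * fderiv ℝ (fderiv ℝ (fderiv ℝ u)) (a,b) (1,0) (1,0) (1,0)) * (6*1) := by
      unfold Phi3; ring
    rw [heq]
    exact H
  -- values at 0
  have hφ0 : Phi u a b 0 = 0 := by
    unfold Phi; norm_num
  have hφ10 : Phi1 u a b 0 = 0 := by
    unfold Phi1
    rw [show ((1:ℝ),(-1:ℝ)) = ((1:ℝ),(0:ℝ)) - ((0:ℝ),(1:ℝ)) by norm_num [Prod.ext_iff],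
      show ((-1:ℝ),(-1:ℝ)) = -((1:ℝ),(0:ℝ)) - ((0:ℝ),(1:ℝ)) by norm_num [Prod.ext_iff]]
    simp only [add_zero, sub_zero, map_sub, map_neg]
    ring
  have hφ20 : Phi2 u a b 0 = 0 := by
    unfold Phi2
    rw [show ((1:ℝ),(-1:ℝ)) = ((1:ℝ),(0:ℝ)) - ((0:ℝ),(1:ℝ)) by norm_num [Prod.ext_iff],
      show ((-1:ℝ),(-1:ℝ)) = -((1:ℝ),(0:ℝ)) - ((0:ℝ),(1:ℝ)) by norm_num [Prod.ext_iff]]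
    simp only [add_zero, sub_zero, map_sub, map_neg, ContinuousLinearMap.sub_apply,
      ContinuousLinearMap.neg_apply, ContinuousLinearMap.coe_sub', ContinuousLinearMap.coe_neg',
      Pi.sub_apply, Pi.neg_apply]
    rw [hsym2 ((a,b):ℝ×ℝ) hmem0 ((0:ℝ),(1:ℝ)) ((1:ℝ),(0:ℝ))]
    ring
  have hφ30 : Phi3 u a b 0 = 0 := by
    unfold Phi3
    rw [show ((1:ℝ),(-1:ℝ)) = ((1:ℝ),(0:ℝ)) - ((0:ℝ),(1:ℝ)) by norm_num [Prod.ext_iff],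
      show ((-1:ℝ),(-1:ℝ)) = -((1:ℝ),(0:ℝ)) - ((0:ℝ),(1:ℝ)) by norm_num [Prod.ext_iff]]
    simp only [add_zero, sub_zero, map_sub, map_neg, ContinuousLinearMap.sub_apply,
      ContinuousLinearMap.neg_apply, ContinuousLinearMap.coe_sub', ContinuousLinearMap.coe_neg',
      Pi.sub_apply, Pi.neg_apply]
    rw [hsym3b, hsym3a ((0:ℝ),(1:ℝ)) ((1:ℝ),(0:ℝ))]
    ring
  -- iterated derivatives of Phi at 0 vanish
  have hball0 : ∀ y : ℝ, y ∈ Metric.ball (0:ℝ) ε → |y| < ε := by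
    intro y hy; simpa [Real.dist_eq] using hy
  have hEq1 : Set.EqOn (deriv (Phi u a b)) (Phi1 u a b) (Metric.ball (0:ℝ) ε) :=
    fun y hy => (Hφ1 y (hball0 y hy)).deriv
  have hEq2 : Set.EqOn (deriv (Phi1 u a b)) (Phi2 u a b) (Metric.ball (0:ℝ) ε) :=
    fun y hy => (Hφ2 y (hball0 y hy)).deriv
  have hEq3 : Set.EqOn (deriv (Phi2 u a b)) (Phi3 u a b) (Metric.ball (0:ℝ) ε) :=
    fun y hy => (Hφ3 y (hball0 y hy)).deriv
  have hmemball : ∀ y : ℝ, y ∈ Metric.ball (0:ℝ) ε → Metric.ball (0:ℝ) ε ∈ nhds y :=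
    fun y hy => Metric.isOpen_ball.mem_nhds hy
  have h0ball : (0:ℝ) ∈ Metric.ball (0:ℝ) ε := Metric.mem_ball_self εpos
  have hd0 : iteratedDeriv 0 (Phi u a b) 0 = 0 := by simpa using hφ0
  have hd1 : iteratedDeriv 1 (Phi u a b) 0 = 0 := by
    rw [iteratedDeriv_one, hEq1 h0ball, hφ10]
  have hDD : Set.EqOn (deriv (deriv (Phi u a b))) (Phi2 u a b) (Metric.ball (0:ℝ) ε) := by
    intro y hy
    have : deriv (Phi u a b) =ᶠ[nhds y] Phi1 u a b :=
      Filter.eventuallyEq_of_mem (hmemball y hy) hEq1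
    rw [this.deriv_eq, hEq2 hy]
  have hd2 : iteratedDeriv 2 (Phi u a b) 0 = 0 := by
    rw [show (2:ℕ) = 1 + 1 from rfl, iteratedDeriv_succ, iteratedDeriv_one]
    rw [hDD h0ball, hφ20]
  have hd3 : iteratedDeriv 3 (Phi u a b) 0 = 0 := by
    rw [show (3:ℕ) = 2 + 1 from rfl, iteratedDeriv_succ]
    have hev2 : iteratedDeriv 2 (Phi u a b) =ᶠ[nhds (0:ℝ)] Phi2 u a b := by
      apply Filter.eventuallyEq_of_mem (hmemball 0 h0ball)
      intro y hy
      rw [show (2:ℕ) = 1 + 1 from rfl, iteratedDeriv_succ, iteratedDeriv_one]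
      exact hDD hy
    rw [hev2.deriv_eq, hEq3 h0ball, hφ30]
  -- smoothness of Phi on Ioo (-ε) ε
  have hsmc1 : ContDiff ℝ 4 (fun t : ℝ => ((a + t, b - t) : ℝ×ℝ)) :=
    (contDiff_const.add contDiff_id).prodMk (contDiff_const.sub contDiff_id)
  have hsmc2 : ContDiff ℝ 4 (fun t : ℝ => ((a - t, b - t) : ℝ×ℝ)) :=
    (contDiff_const.sub contDiff_id).prodMk (contDiff_const.sub contDiff_id)
  have huO : ContDiffOn ℝ 4 u (Metric.ball ((a,b) : ℝ×ℝ) ε) :=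
    fun p hp => (hball p hp).contDiffWithinAt
  have hcu1 : ContDiffOn ℝ 4 (fun h : ℝ => u (a + h, b - h)) (Ioo (-ε) ε) :=
    huO.comp hsmc1.contDiffOn (fun h hh => hm1 h (abs_lt.mpr ⟨hh.1, hh.2⟩))
  have hcu2 : ContDiffOn ℝ 4 (fun h : ℝ => u (a - h, b - h)) (Ioo (-ε) ε) :=
    huO.comp hsmc2.contDiffOn (fun h hh => hm2 h (abs_lt.mpr ⟨hh.1, hh.2⟩))
  have hPhiC : ContDiffOn ℝ 4 (Phi u a b) (Ioo (-ε) ε) := by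
    unfold Phi
    refine ContDiffOn.add (ContDiffOn.sub (ContDiffOn.add (ContDiffOn.sub ?_ hcu1) hcu2) ?_) ?_
    · exact (contDiff_const.mul (contDiff_const.mul contDiff_id)).contDiffOn
    · exact (contDiff_const.mul (contDiff_const.mul (contDiff_id.pow 2))).contDiffOn
    · exact (contDiff_const.mul (contDiff_id.pow 3)).contDiffOn
  -- Taylor bound
  have hr2 : (0:ℝ) < ε/2 := by positivity
  have hsub : Icc (0:ℝ) (ε/2) ⊆ Ioo (-ε) ε := fun y hy => ⟨by linarith [hy.1], by linarith [hy.2]⟩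
  have hPhiIcc : ContDiffOn ℝ ((3:ℕ)+1) (Phi u a b) (Icc (0:ℝ) (ε/2)) := by
    have := hPhiC.mono hsub
    exact_mod_cast this
  obtain ⟨C', hC'⟩ := exists_taylor_mean_remainder_bound (le_of_lt hr2) hPhiIcc
  have hzero : ∀ k, k ≤ 4 → iteratedDerivWithin k (Phi u a b) (Icc (0:ℝ) (ε/2)) 0
      = iteratedDeriv k (Phi u a b) 0 := by
    intro k hk
    exact iteratedDerivWithin_Icc_eq' isOpen_Ioo hPhiC hr2 hsub k hk 0
      (left_mem_Icc.mpr (le_of_lt hr2))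
  have hT : ∀ x : ℝ, taylorWithinEval (Phi u a b) 3 (Icc (0:ℝ) (ε/2)) 0 x = 0 := by
    intro x
    rw [taylor_within_apply]
    have e0 : iteratedDerivWithin 0 (Phi u a b) (Icc (0:ℝ) (ε/2)) 0 = 0 := by
      rw [hzero 0 (by norm_num)]; exact hd0
    have e1 : iteratedDerivWithin 1 (Phi u a b) (Icc (0:ℝ) (ε/2)) 0 = 0 := by
      rw [hzero 1 (by norm_num)]; exact hd1
    have e2 : iteratedDerivWithin 2 (Phi u a b) (Icc (0:ℝ) (ε/2)) 0 = 0 := by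
      rw [hzero 2 (by norm_num)]; exact hd2
    have e3 : iteratedDerivWithin 3 (Phi u a b) (Icc (0:ℝ) (ε/2)) 0 = 0 := by
      rw [hzero 3 (by norm_num)]; exact hd3
    simp [Finset.sum_range_succ, e0, e1, e2, e3]
  -- conclusion
  refine ⟨max C' 0 / 2 + 1, by positivity, ε/2, hr2, ?_⟩
  intro h hh
  have hpos : (0:ℝ) < h := hh.1
  have hx : h ∈ Icc (0:ℝ) (ε/2) := ⟨le_of_lt hpos, hh.2⟩
  have hb := hC' h hx
  rw [hT h, sub_zero, Real.norm_eq_abs] at hb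
  -- rewrite goal via fderiv identities
  rw [hMd, hKd1, hKd2, hpdx ((a,b):ℝ×ℝ) hmem0]
  have hne : (2:ℝ) * h^2 ≠ 0 := by positivity
  have key : fderiv ℝ (fderiv ℝ u) (a,b) (1,0) (0,1)
      - 1 / (2 * h ^ 2) * (2 * h * fderiv ℝ u (a,b) (1,0) - u (a + h, b - h) + u (a - h, b - h))
      - h / 2 * (fderiv ℝ (fderiv ℝ (fderiv ℝ u)) (a,b) (1,0) (0,1) (0,1)
          + 1 / 3 * fderiv ℝ (fderiv ℝ (fderiv ℝ u)) (a,b) (1,0) (1,0) (1,0))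
      = -(Phi u a b h) / (2 * h^2) := by
    unfold Phi; field_simp; ring
  rw [key, abs_div, abs_neg, abs_of_pos (show (0:ℝ) < 2*h^2 by positivity),
    div_le_iff₀ (show (0:ℝ) < 2*h^2 by positivity)]
  have h4 : (0:ℝ) ≤ h^4 := by positivity
  have hC'le : C' ≤ max C' 0 := le_max_left _ _
  calc |Phi u a b h| ≤ C' * (h - 0)^(3+1) := hb
    _ = C' * h^4 := by norm_num
    _ ≤ max C' 0 * h^4 := by nlinarith
    _ ≤ (max C' 0 / 2 + 1) * h ^ 2 * (2 * h ^ 2) := by nlinarith [le_max_right C' 0]
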